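/- Let F be a field of odd characteristic, L/F a field extension of degree m, n = 2d an even integer with m ≥ n. Let h_{n,L} be the standard hyperbolic bilinear form on Lⁿ given by h(x,y) = Σ_{k=1}^{d} (x_k y_{k+d} + x_{k+d} y_k). If C ⊆ Lⁿ is an L-subspace satisfying C = C^⊥ with respect to h_{n,L} (a Lagrangian code), then the minimum rank distance of C satisfies d₁(C) ≤ d. In particular, C is not MRD. -/

import Mathlib

open Module Submodule

section Aux

variable {F L : Type*} [Field F] [Field L] [Algebra F L] [FiniteDimensional F L] {d : ℕ}

omit [FiniteDimensional F L] in
/-- Rank-bound helper: if all entries of `c` lie in `insert 0 s`, the rank is at most `s.card`. -/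
lemma aux_rank_le (c : Fin d ⊕ Fin d → L) (s : Finset L)
    (h : Set.range c ⊆ insert (0 : L) ↑s) :
    Module.finrank F (Submodule.span F (Set.range c)) ≤ s.card := by
  have h1 : Submodule.span F (Set.range c) ≤ Submodule.span F (insert (0:L) ↑s) :=
    Submodule.span_mono h
  rw [Submodule.span_insert_zero] at h1
  calc Module.finrank F (Submodule.span F (Set.range c))
      ≤ Module.finrank F (Submodule.span F (s : Set L)) := Submodule.finrank_mono h1
    _ ≤ s.card := finrank_span_finset_le_card s

/-- The standard hyperbolic bilinear form on `L^{2d}`. -/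
noncomputable def auxB (L : Type*) [Field L] (d : ℕ) :
    (Fin d ⊕ Fin d → L) →ₗ[L] (Fin d ⊕ Fin d → L) →ₗ[L] L :=
  LinearMap.mk₂ L
    (fun x y => ∑ k : Fin d, (x (Sum.inl k) * y (Sum.inr k) + x (Sum.inr k) * y (Sum.inl k)))
    (by intro x x' y; rw [← Finset.sum_add_distrib]; refine Finset.sum_congr rfl fun k _ => by
          simp [Pi.add_apply]; ring)
    (by intro a x y; simp only [Finset.mul_sum, Pi.smul_apply, smul_eq_mul]
        exact Finset.sum_congr rfl fun k _ => by ring)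
    (by intro x y y'; rw [← Finset.sum_add_distrib]; refine Finset.sum_congr rfl fun k _ => by
          simp [Pi.add_apply]; ring)
    (by intro a x y; simp only [Finset.mul_sum, Pi.smul_apply, smul_eq_mul]
        exact Finset.sum_congr rfl fun k _ => by ring)

lemma auxB_apply (x y : Fin d ⊕ Fin d → L) :
    auxB L d x y
      = ∑ k : Fin d, (x (Sum.inl k) * y (Sum.inr k) + x (Sum.inr k) * y (Sum.inl k)) := rfl

lemma auxB_single_inr (z : Fin d ⊕ Fin d → L) (j : Fin d) :
    auxB L d z (Pi.single (Sum.inr j) 1) = z (Sum.inl j) := by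
  rw [auxB_apply]
  rw [Finset.sum_eq_single j]
  · simp [Pi.single_apply]
  · intro k _ hk
    simp [Pi.single_apply, hk]
  · simp

lemma auxB_injective : Function.Injective (auxB L d) := by
  rw [← LinearMap.ker_eq_bot, Submodule.eq_bot_iff]
  intro z hz
  have hz' : auxB L d z = 0 := hz
  funext i
  cases i with
  | inl j =>
      have := congrArg (fun f => f (Pi.single (Sum.inr j) 1)) hz'
      simpa [auxB_single_inr] using this
  | inr j =>
      have := congrArg (fun f => f (Pi.single (Sum.inl j) 1)) hz'
      simp only [LinearMap.zero_apply] at this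
      rw [auxB_apply, Finset.sum_eq_single j] at this
      · simpa [Pi.single_apply] using this
      · intro k _ hk; simp [Pi.single_apply, hk]
      · simp

lemma auxB_surjective : Function.Surjective (auxB L d) := by
  rw [← (LinearMap.injective_iff_surjective_of_finrank_eq_finrank
      (Subspace.dual_finrank_eq (K := L) (V := Fin d ⊕ Fin d → L)).symm)]
  exact auxB_injective

end Aux

/-- Over a field of odd characteristic, a Lagrangian code (self-dual for the standard
hyperbolic form on `L^{2d}`) has minimum rank distance at most `d`; in particular it is
not MRD. -/
theorem stmt_3 (F L : Type*) [Field F] [Field L] [Algebra F L] [FiniteDimensional F L]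
    (p : ℕ) [Fact p.Prime] [CharP F p] (hp : Odd p)
    (d : ℕ) (hd : 0 < d) (hm : 2 * d ≤ Module.finrank F L)
    (C : Submodule L (Fin d ⊕ Fin d → L))
    (hC : ∀ x, x ∈ C ↔ ∀ y ∈ C,
      ∑ k : Fin d, (x (Sum.inl k) * y (Sum.inr k) + x (Sum.inr k) * y (Sum.inl k)) = 0) :
    ∃ c ∈ C, c ≠ 0 ∧ Module.finrank F (Submodule.span F (Set.range c)) ≤ d := by
  classical
  haveI : NeZero d := ⟨hd.ne'⟩
  -- the subspace of vectors supported in the second block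
  set W : Submodule L (Fin d ⊕ Fin d → L) := LinearMap.ker (LinearMap.funLeft L L Sum.inl)
  have hW : ∀ x : Fin d ⊕ Fin d → L, x ∈ W ↔ ∀ k, x (Sum.inl k) = 0 := by
    intro x
    constructor
    · intro hx k; exact congrFun hx k
    · intro hx; funext k; exact hx k
  by_cases h1 : ∃ c, c ∈ C ∧ c ≠ 0 ∧ ∀ k, c (Sum.inl k) = 0
  · obtain ⟨c, hcC, hc0, hcl⟩ := h1
    refine ⟨c, hcC, hc0, ?_⟩
    refine aux_rank_le (F := F) c (Finset.image (fun k => c (Sum.inr k)) Finset.univ)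
      ?_ |>.trans ?_
    · rintro _ ⟨i, rfl⟩
      cases i with
      | inl k => simp [hcl k]
      | inr k => exact Set.mem_insert_iff.2 (Or.inr (by simp))
    · exact (Finset.card_image_le.trans (by simp))
  · push_neg at h1
    -- the sum C ⊔ W is everything
    have hsup : C ⊔ W = ⊤ := by
      by_contra hne
      obtain ⟨f, hf0, hf⟩ := Submodule.exists_dual_map_eq_bot_of_lt_top
        (lt_top_iff_ne_top.2 hne) inferInstance
      obtain ⟨z, rfl⟩ := auxB_surjective f
      have hvan : ∀ x ∈ C ⊔ W, auxB L d z x = 0 := by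
        intro x hx
        have : auxB L d z x ∈ (C ⊔ W).map (auxB L d z) := Submodule.mem_map_of_mem hx
        rwa [hf, Submodule.mem_bot] at this
      have hzC : z ∈ C := by
        rw [hC]
        intro y hy
        exact hvan y (Submodule.mem_sup_left hy)
      have hzl : ∀ k, z (Sum.inl k) = 0 := by
        intro k
        have hmem : (Pi.single (Sum.inr k) 1 : Fin d ⊕ Fin d → L) ∈ W := by
          rw [hW]; intro j; simp [Pi.single_apply]
        have := hvan _ (Submodule.mem_sup_right hmem)
        rwa [auxB_single_inr] at this
      have hz0 : z ≠ 0 := by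
        intro h; apply hf0; rw [h]; exact map_zero _
      obtain ⟨k, hk⟩ := h1 z hzC hz0
      exact hk (hzl k)
    -- take the preimage of the first standard basis vector
    have he : (Sum.elim (Pi.single (0 : Fin d) (1:L)) 0 : Fin d ⊕ Fin d → L) ∈ C ⊔ W := by
      rw [hsup]; trivial
    obtain ⟨c, hcC, w, hwW, hcw⟩ := Submodule.mem_sup.1 he
    have hcl : ∀ k, c (Sum.inl k) = (Pi.single (0 : Fin d) (1:L) : Fin d → L) k := by
      intro k
      have := congrFun hcw (Sum.inl k)
      have hw := (hW w).1 hwW k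
      simp only [Pi.add_apply, hw, add_zero] at this
      simpa using this
    have hc0 : c ≠ 0 := by
      intro h
      have := hcl 0
      rw [h] at this
      simp at this
    -- characteristic: 2 ≠ 0 in L
    have hLchar : CharP L p := charP_of_injective_algebraMap (algebraMap F L).injective p
    have h2 : (2 : L) ≠ 0 := by
      have : ¬ (p ∣ 2) := by
        intro hdvd
        have hp2 : p = 2 := ((Nat.prime_dvd_prime_iff_eq Fact.out Nat.prime_two).1 hdvd)
        rw [hp2, Nat.odd_iff] at hp
        norm_num at hp
      have := (CharP.cast_eq_zero_iff L p 2).not.2 this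
      simpa using this
    -- self-orthogonality gives c (inr 0) = 0
    have hself : ∑ k : Fin d, (c (Sum.inl k) * c (Sum.inr k) + c (Sum.inr k) * c (Sum.inl k)) = 0 :=
      (hC c).1 hcC c hcC
    have hsum : ∑ k : Fin d, c (Sum.inl k) * c (Sum.inr k) = 0 := by
      have : (2:L) * ∑ k : Fin d, c (Sum.inl k) * c (Sum.inr k) = 0 := by
        rw [Finset.mul_sum, ← hself]
        exact Finset.sum_congr rfl fun k _ => by ring
      rcases mul_eq_zero.1 this with h | h
      · exact absurd h h2
      · exact h
    have hcr0 : c (Sum.inr 0) = 0 := by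
      rw [Finset.sum_eq_single (0 : Fin d)] at hsum
      · rw [hcl 0] at hsum; simpa using hsum
      · intro k _ hk; rw [hcl k]; simp [Pi.single_apply, hk]
      · simp
    refine ⟨c, hcC, hc0, ?_⟩
    refine aux_rank_le (F := F) c
      (insert (1:L) ((Finset.univ.erase (0 : Fin d)).image (fun k => c (Sum.inr k)))) ?_
      |>.trans ?_
    · rintro _ ⟨i, rfl⟩
      cases i with
      | inl k =>
          rw [hcl k]
          rcases eq_or_ne k 0 with h | h
          · subst h; simp
          · simp [Pi.single_apply, h]
      | inr k =>
          rcases eq_or_ne k 0 with h | h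
          · subst h; simp [hcr0]
          · refine Set.mem_insert_iff.2 (Or.inr ?_)
            simp only [Finset.coe_insert, Set.mem_insert_iff, Finset.mem_coe,
              Finset.mem_image]
            exact Or.inr ⟨k, by simp [h], rfl⟩
    · calc _ ≤ ((Finset.univ.erase (0 : Fin d)).image (fun k => c (Sum.inr k))).card + 1 :=
            Finset.card_insert_le _ _
        _ ≤ (Finset.univ.erase (0 : Fin d)).card + 1 := by
            exact Nat.add_le_add_right Finset.card_image_le 1
        _ ≤ d := by
            rw [Finset.card_erase_of_mem (Finset.mem_univ _)]
            simp only [Finset.card_univ, Fintype.card_fin]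
            omega
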